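/- Inner product via one long multiplication (binary segmentation): let u_0,…,u_{n−1} and v_0,…,v_{n−1} be natural numbers with u_i < 2^g and v_i < 2^h, and let k = g + h + ⌈log₂ n⌉. Define U = Σ_{i=0}^{n−1} u_i 2^{ki} and V = Σ_{i=0}^{n−1} v_i 2^{k(n−1−i)}. Then the inner product Σ_{i=0}^{n−1} u_i v_i equals (U·V / 2^{k(n−1)}) mod 2^k. -/

import Mathlib

open Finset

private lemma digit_sum_lt {k : ℕ} (c : ℕ → ℕ) (hc : ∀ d, c d < 2 ^ k) (m : ℕ) :
    ∑ d ∈ Finset.range m, c d * 2 ^ (k * d) < 2 ^ (k * m) := by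
  induction m with
  | zero => simp
  | succ m ih =>
    rw [Finset.sum_range_succ]
    calc ∑ d ∈ Finset.range m, c d * 2 ^ (k * d) + c m * 2 ^ (k * m)
        < 2 ^ (k * m) + c m * 2 ^ (k * m) := Nat.add_lt_add_right ih _
      _ = (c m + 1) * 2 ^ (k * m) := by ring
      _ ≤ 2 ^ k * 2 ^ (k * m) := Nat.mul_le_mul_right _ (hc m)
      _ = 2 ^ (k * (m + 1)) := by rw [Nat.mul_succ, pow_add, Nat.mul_comm]

/-- Inner product via one long multiplication (binary segmentation):
with `k = g + h + ⌈log₂ n⌉`, `U = ∑ u_i 2^{k i}` and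
`V = ∑ v_i 2^{k (n-1-i)}`, the inner product `∑ u_i v_i` is the middle
"digit" of the product `U * V`. -/
theorem inner_product_binary_segmentation {n g h : ℕ} (hn : 0 < n)
    (u v : Fin n → ℕ) (hu : ∀ i, u i < 2 ^ g) (hv : ∀ i, v i < 2 ^ h) :
    let k := g + h + Nat.clog 2 n
    let U := ∑ i : Fin n, u i * 2 ^ (k * (i : ℕ))
    let V := ∑ i : Fin n, v i * 2 ^ (k * (n - 1 - (i : ℕ)))
    (∑ i : Fin n, u i * v i) = (U * V / 2 ^ (k * (n - 1))) % 2 ^ k := by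
  intro k U V
  set m := n - 1 with hm
  have hple : ∀ i : Fin n, (i : ℕ) ≤ m := fun i => by
    have := i.isLt; omega
  set c : ℕ → ℕ := fun d =>
    ∑ p ∈ Finset.univ.filter
      (fun p : Fin n × Fin n => (p.1 : ℕ) + (m - (p.2 : ℕ)) = d), u p.1 * v p.2 with hc
  -- bound on digits
  have hcb : ∀ d, c d < 2 ^ k := by
    intro d
    have hcard : (Finset.univ.filter
        (fun p : Fin n × Fin n => (p.1 : ℕ) + (m - (p.2 : ℕ)) = d)).card ≤ n := by
      have := Finset.card_le_card_of_injOn (f := Prod.fst)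
        (s := Finset.univ.filter
          (fun p : Fin n × Fin n => (p.1 : ℕ) + (m - (p.2 : ℕ)) = d))
        (t := Finset.univ) (fun _ _ => Finset.mem_univ _) ?_
      · simpa using this
      · intro p hp q hq hpq
        simp only [Finset.coe_filter, Set.mem_setOf_eq] at hp hq
        have h1 : (p.1 : ℕ) = (q.1 : ℕ) := congrArg Fin.val hpq
        have h2 : (p.2 : ℕ) = (q.2 : ℕ) := by
          have := hple p.2; have := hple q.2; omega
        exact Prod.ext hpq (Fin.ext h2)
    have hterm : ∀ p ∈ Finset.univ.filter
        (fun p : Fin n × Fin n => (p.1 : ℕ) + (m - (p.2 : ℕ)) = d),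
        u p.1 * v p.2 ≤ 2 ^ (g + h) - 1 := by
      intro p _
      have : u p.1 * v p.2 < 2 ^ g * 2 ^ h :=
        Nat.mul_lt_mul'' (hu p.1) (hv p.2)
      rw [← pow_add] at this
      omega
    calc c d ≤ (Finset.univ.filter
          (fun p : Fin n × Fin n => (p.1 : ℕ) + (m - (p.2 : ℕ)) = d)).card
          * (2 ^ (g + h) - 1) := by
          simpa using Finset.sum_le_card_nsmul _ _ _ hterm
      _ ≤ n * (2 ^ (g + h) - 1) := Nat.mul_le_mul_right _ hcard
      _ < n * 2 ^ (g + h) := by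
          have h1 : (0:ℕ) < 2 ^ (g + h) := Nat.pow_pos (by norm_num)
          exact (Nat.mul_lt_mul_left hn).mpr (by omega)
      _ ≤ 2 ^ (Nat.clog 2 n) * 2 ^ (g + h) :=
          Nat.mul_le_mul_right _ (Nat.le_pow_clog (by norm_num) n)
      _ = 2 ^ k := by rw [← pow_add]; show _ = 2 ^ (g + h + Nat.clog 2 n); ring
  -- expansion of U * V in base 2^k
  have hUV : U * V = ∑ d ∈ Finset.range (2 * m + 1), c d * 2 ^ (k * d) := by
    have h1 : U * V = ∑ p : Fin n × Fin n,
        u p.1 * v p.2 * 2 ^ (k * ((p.1 : ℕ) + (m - (p.2 : ℕ)))) := by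
      rw [Finset.sum_mul_sum, Fintype.sum_prod_type]
      refine Finset.sum_congr rfl fun i _ => Finset.sum_congr rfl fun j _ => ?_
      rw [Nat.mul_add, pow_add]; ring
    rw [h1]
    rw [← Finset.sum_fiberwise_of_maps_to
      (g := fun p : Fin n × Fin n => (p.1 : ℕ) + (m - (p.2 : ℕ)))
      (t := Finset.range (2 * m + 1))
      (fun p _ => Finset.mem_range.mpr (by
        show (p.1 : ℕ) + (m - (p.2 : ℕ)) < 2 * m + 1
        have := hple p.1; omega))]
    refine Finset.sum_congr rfl fun d _ => ?_
    simp only [hc, Finset.sum_mul]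
    refine Finset.sum_congr rfl fun p hp => ?_
    rw [(Finset.mem_filter.mp hp).2]
  -- the middle digit is the inner product
  have hdiag : c m = ∑ i : Fin n, u i * v i := by
    simp only [hc]
    have hfe : Finset.univ.filter
        (fun p : Fin n × Fin n => (p.1 : ℕ) + (m - (p.2 : ℕ)) = m)
        = Finset.univ.filter (fun p : Fin n × Fin n => p.1 = p.2) := by
      ext p
      simp only [Finset.mem_filter, Finset.mem_univ, true_and]
      constructor
      · intro hp
        have := hple p.1; have := hple p.2
        exact Fin.ext (by omega)
      · intro hp
        have := hple p.2
        rw [hp]; omega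
    rw [hfe]
    rw [Finset.sum_filter]
    rw [Fintype.sum_prod_type]
    refine Finset.sum_congr rfl fun i _ => ?_
    rw [Finset.sum_eq_single i]
    · simp
    · intro j _ hj; simp [Ne.symm hj]
    · simp
  -- split the sum
  set B : ℕ := ∑ d ∈ Finset.Ico (m + 1) (2 * m + 1), c d * 2 ^ (k * (d - (m + 1))) with hB
  have hhigh : ∑ d ∈ Finset.Ico (m + 1) (2 * m + 1), c d * 2 ^ (k * d)
      = 2 ^ (k * m) * (2 ^ k * B) := by
    rw [hB, Finset.mul_sum, Finset.mul_sum]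
    refine Finset.sum_congr rfl fun d hd => ?_
    have hd1 : m + 1 ≤ d := (Finset.mem_Ico.mp hd).1
    have hkd : k * d = k * m + (k + k * (d - (m + 1))) := by
      have hde : d = (m + 1) + (d - (m + 1)) := by omega
      calc k * d = k * ((m + 1) + (d - (m + 1))) := by rw [← hde]
        _ = k * m + (k + k * (d - (m + 1))) := by ring
    rw [hkd, pow_add, pow_add]; ring
  have hsplit : U * V = (∑ d ∈ Finset.range m, c d * 2 ^ (k * d))
      + 2 ^ (k * m) * ((∑ i : Fin n, u i * v i) + 2 ^ k * B) := by
    rw [hUV]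
    rw [Finset.range_eq_Ico,
      ← Finset.sum_Ico_consecutive _ (Nat.zero_le (m + 1)) (by omega : m + 1 ≤ 2 * m + 1),
      ← Finset.range_eq_Ico, Finset.sum_range_succ, hhigh, hdiag]
    ring
  have hLow : (∑ d ∈ Finset.range m, c d * 2 ^ (k * d)) < 2 ^ (k * m) := digit_sum_lt c hcb m
  have hS : (∑ i : Fin n, u i * v i) < 2 ^ k := hdiag ▸ hcb m
  rw [hsplit, Nat.add_mul_div_left _ _ (Nat.pow_pos (by norm_num)),
    Nat.div_eq_of_lt hLow, Nat.zero_add, Nat.add_mul_mod_self_left,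
    Nat.mod_eq_of_lt hS]
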